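/- Let F be an algebraically closed field of characteristic zero, let A be a unital finite-dimensional associative F-algebra, and let λ ∈ F be nonzero. Suppose the capacity of A is at most n, i.e., every finite family of pairwise orthogonal nonzero idempotents of A (elements e_i with e_i² = e_i ≠ 0 and e_i·e_j = 0 for i ≠ j) has at most n members. Then for every Rota–Baxter operator R of weight λ on A there exists k with 0 ≤ k ≤ 2n such that R^k ∘ (R + λ·id)^{2n−k} = 0; in particular rb_λ(A) ≤ 2n. -/

import Mathlib

open Polynomial

section LemC

variable {E : Type*} [Ring E]

/-- Abstract unit-twisting lemma: from `l*m = m*(l+m+c)` and `u = m + c` a unit,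
the element `v = m * u⁻¹` satisfies `l*v = v*(l+c)`. -/
lemma lemC (l m c : E) (u : Eˣ) (hu : (u : E) = m + c)
    (hrel : l * m = m * (l + m + c)) (hc2 : c * l = l * c) :
    l * (m * ↑u⁻¹) = (m * ↑u⁻¹) * (l + c) := by
  have h1 : l * (u : E) = ↑u * l + m * ↑u := by
    rw [hu, mul_add, hrel, ← hc2]; noncomm_ring
  have h2 : (↑u⁻¹ : E) * l = l * ↑u⁻¹ + ↑u⁻¹ * m := by
    have := congrArg (fun z => (↑u⁻¹ : E) * z * ↑u⁻¹) h1
    simpa [mul_assoc, Units.mul_inv_cancel_left, Units.inv_mul_cancel_left,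
      Units.mul_inv, Units.inv_mul, mul_add, add_mul] using this
  have key : l * (↑u⁻¹ : E) + 1 = ↑u⁻¹ * (l + c) := by
    rw [mul_add, h2]
    have : (↑u⁻¹ : E) * m + ↑u⁻¹ * c = 1 := by
      rw [← mul_add, ← hu, Units.inv_mul]
    rw [add_assoc, this]
  calc l * (m * ↑u⁻¹) = (l * m) * ↑u⁻¹ := by rw [mul_assoc]
    _ = m * ((l + m + c) * ↑u⁻¹) := by rw [hrel, mul_assoc]
    _ = m * (l * ↑u⁻¹ + (m + c) * ↑u⁻¹) := by noncomm_ring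
    _ = m * (l * ↑u⁻¹ + 1) := by rw [← hu, Units.mul_inv]
    _ = m * (↑u⁻¹ * (l + c)) := by rw [← key]
    _ = (m * ↑u⁻¹) * (l + c) := by rw [mul_assoc]

end LemC

open Polynomial Module

section Chain

variable {F W : Type*} [Field F] [IsAlgClosed F] [AddCommGroup W] [Module F W]
  [FiniteDimensional F W]

lemma chain_eigenvalues (l v : Module.End F W) (c : F)
    (hrel : l * v = v * (l + c • 1)) (m : ℕ) (hv : v ^ m ≠ 0) :
    ∃ μ : F, ∀ j : ℕ, j ≤ m → l.HasEigenvalue (μ + (j : F) * c) := by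
  -- v maps the max generalized eigenspace for μ to the one for μ + c
  have step : ∀ (μ : F) (x : W), x ∈ l.maxGenEigenspace μ →
      v x ∈ l.maxGenEigenspace (μ + c) := by
    intro μ x hx
    rw [Module.End.mem_maxGenEigenspace] at hx ⊢
    obtain ⟨k, hk⟩ := hx
    refine ⟨k, ?_⟩
    have hcom : (l - (μ + c) • 1) * v = v * (l - μ • 1) := by
      have h1 : (l - (μ + c) • 1) * v = l * v - (μ + c) • v := by
        rw [sub_mul, smul_mul_assoc, one_mul]
      have h2 : v * (l - μ • 1) = v * l - μ • v := by
        rw [mul_sub, mul_smul_comm, mul_one]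
      rw [h1, h2, hrel, mul_add, mul_smul_comm, mul_one, add_smul]
      abel
    have hpow : ∀ k : ℕ, ((l - (μ + c) • 1) ^ k) * v = v * ((l - μ • 1) ^ k) := by
      intro k
      induction k with
      | zero => simp
      | succ k ih =>
        rw [pow_succ, pow_succ, mul_assoc, hcom, ← mul_assoc, ih, mul_assoc]
    have := congrArg (fun f : Module.End F W => f x) (hpow k)
    simp only [Module.End.mul_apply] at this
    rw [this, hk, map_zero]
  -- find a starting generalized eigenvector not killed by v^m
  obtain ⟨μ₀, x, hx, hvx⟩ :
      ∃ (μ₀ : F) (x : W), x ∈ l.maxGenEigenspace μ₀ ∧ (v ^ m) x ≠ 0 := by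
    by_contra hcon
    push_neg at hcon
    apply hv
    have htop : ∀ y : W, (v ^ m) y = 0 := by
      intro y
      have hy : y ∈ ⨆ μ : F, l.maxGenEigenspace μ := by
        rw [Module.End.iSup_maxGenEigenspace_eq_top]; trivial
      have hle : (⨆ μ : F, l.maxGenEigenspace μ) ≤ LinearMap.ker (v ^ m) := by
        apply iSup_le
        intro μ z hz
        exact LinearMap.mem_ker.mpr (hcon μ z hz)
      exact LinearMap.mem_ker.mp (hle hy)
    exact LinearMap.ext fun y => htop y
  refine ⟨μ₀, ?_⟩
  intro j hj
  -- v^j x is a nonzero element of the gen eigenspace for μ₀ + j c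
  have hmem : ∀ j : ℕ, (v ^ j) x ∈ l.maxGenEigenspace (μ₀ + (j : F) * c) := by
    intro j
    induction j with
    | zero => simpa using hx
    | succ j ih =>
      have := step _ _ ih
      have harith : μ₀ + (j : F) * c + c = μ₀ + ((j : ℕ) + 1 : F) * c := by ring
      rw [harith] at this
      rw [pow_succ']
      simpa [Module.End.mul_apply, Nat.cast_add, Nat.cast_one] using this
  have hne : (v ^ j) x ≠ 0 := by
    intro h0
    apply hvx
    have : v ^ m = v ^ (m - j) * v ^ j := by rw [← pow_add]; congr 1; omega
    rw [this, Module.End.mul_apply, h0, map_zero]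
  obtain ⟨k, hk⟩ := (Module.End.mem_maxGenEigenspace _ _ _).mp (hmem j)
  have hgen : l.HasGenEigenvalue (μ₀ + (j : F) * c) k := by
    rw [Module.End.hasGenEigenvalue_iff]
    intro hbot
    apply hne
    have : (v ^ j) x ∈ l.genEigenspace (μ₀ + (j : F) * c) k := by
      rw [Module.End.mem_genEigenspace_nat, LinearMap.mem_ker]
      exact hk
    rw [hbot] at this
    simpa using this
  exact Module.End.hasEigenvalue_of_hasGenEigenvalue hgen

end Chain

open Polynomial

section Roots

variable {F A : Type*} [Field F] [Ring A] [Algebra F A]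

/-- If `r * x = t • x` for `x ≠ 0`, then `t` is a root of the minimal polynomial of `r`. -/
lemma isRoot_minpoly_of_smul_eq [FiniteDimensional F A] {r x : A} {t : F}
    (hx : x ≠ 0) (h : r * x = t • x) : (minpoly F r).IsRoot t := by
  have key : ∀ f : F[X], (aeval r f) * x = (f.eval t) • x := by
    intro f
    induction f using Polynomial.induction_on with
    | C a => rw [aeval_C, eval_C, ← Algebra.smul_def]
    | add p q hp hq => rw [map_add, add_mul, hp, hq, eval_add, add_smul]
    | monomial n a ih =>
      have hsplit : C a * X ^ (n + 1) = C a * X ^ n * X := by ring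
      rw [hsplit, map_mul, aeval_X, mul_assoc, h, mul_smul_comm, ih, smul_smul]
      congr 1
      simp only [eval_mul, eval_pow, eval_X, eval_C]
      ring
  have h0 : (aeval r (minpoly F r)) * x = 0 := by rw [minpoly.aeval, zero_mul]
  rw [key] at h0
  rcases smul_eq_zero.mp h0 with h' | h'
  · exact h'
  · exact absurd h' hx

/-- The number of distinct roots of the minimal polynomial of an element is bounded by
the maximal number of pairwise orthogonal nonzero idempotents. -/
lemma card_roots_minpoly_le [DecidableEq F] [Nontrivial A] [FiniteDimensional F A]
    (n : ℕ) (hcap : ∀ (m : ℕ) (e : Fin m → A),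
      (∀ i, e i * e i = e i) → (∀ i, e i ≠ 0) →
      (∀ i j, i ≠ j → e i * e j = 0) → m ≤ n) (r : A) :
    (minpoly F r).roots.toFinset.card ≤ n := by
  set g := minpoly F r with hgdef
  have hint : IsIntegral F r := Algebra.IsIntegral.isIntegral (R := F) r
  have hg0 : g ≠ 0 := minpoly.ne_zero hint
  have hgaeval : aeval r g = 0 := by rw [hgdef]; exact minpoly.aeval F r
  have spec : ∀ β : {x // x ∈ g.roots.toFinset}, ∃ c f : F[X],
      ((aeval r c) * (aeval r c) = aeval r c) ∧ (aeval r c ≠ 0) ∧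
      (g = (X - C (β : F)) ^ (g.rootMultiplicity (β : F)) * f) ∧ (f ∣ c) ∧
      (∀ γ : F, γ ≠ (β : F) → (X - C γ) ^ (g.rootMultiplicity γ) ∣ c) := by
    rintro ⟨β, hβ⟩
    have hroot : g.IsRoot β := isRoot_of_mem_roots (Multiset.mem_toFinset.mp hβ)
    set m := g.rootMultiplicity β with hm
    have hm0 : m ≠ 0 := ((rootMultiplicity_pos hg0).mpr hroot).ne'
    obtain ⟨f, hgf, hnd⟩ := g.exists_eq_pow_rootMultiplicity_mul_and_not_dvd hg0 β
    have hco : IsCoprime f ((X - C β) ^ m) :=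
      (irreducible_X_sub_C β).coprime_pow_of_not_dvd m hnd
    obtain ⟨u, w, hbez⟩ := hco
    refine ⟨u * f, f, ?_, ?_, hgf, dvd_mul_left f u, ?_⟩
    · -- idempotent
      have hpoly : (u * f) * (u * f) = u * f - (u * w) * g := by
        have h1 : w * (X - C β) ^ m = 1 - u * f := by rw [← hbez]; ring
        have : (u * w) * g = (u * f) * (w * (X - C β) ^ m) := by rw [hgf]; ring
        rw [this, h1]; ring
      rw [← map_mul, hpoly, map_sub, map_mul, map_mul, hgaeval, mul_zero, sub_zero]
    · -- nonzero
      intro hzero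
      have hdvd : g ∣ u * f := minpoly.dvd F r hzero
      have hXg : (X - C β) ∣ g := by
        rw [hgf]
        exact Dvd.dvd.mul_right (dvd_pow_self _ hm0) f
      obtain ⟨d, hd⟩ := hXg.trans hdvd
      have heval : (u * f).eval β = 0 := by rw [hd]; simp
      have heval1 : (u * f).eval β = 1 := by
        have := congrArg (fun p => p.eval β) hbez
        simpa [zero_pow hm0] using this
      rw [heval] at heval1
      exact zero_ne_one heval1
    · -- divisibility by other root powers
      intro γ hγ
      have h1 : (X - C γ) ^ (g.rootMultiplicity γ) ∣ g := g.pow_rootMultiplicity_dvd γ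
      have hcop : IsCoprime ((X - C γ) ^ (g.rootMultiplicity γ)) ((X - C β) ^ m) := by
        apply IsCoprime.pow
        apply isCoprime_X_sub_C_of_isUnit_sub
        simpa using sub_ne_zero_of_ne hγ
      have h2 : (X - C γ) ^ (g.rootMultiplicity γ) ∣ ((X - C β) ^ m) * f := hgf ▸ h1
      have h3 : (X - C γ) ^ (g.rootMultiplicity γ) ∣ f := hcop.dvd_of_dvd_mul_left h2
      exact h3.trans (dvd_mul_left f u)
  choose c f hidem hnz hgf hfc hdvd using spec
  let Eq := g.roots.toFinset.equivFin
  refine hcap _ (fun i => aeval r (c (Eq.symm i))) (fun i => hidem _) (fun i => hnz _) ?_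
  intro i j hij
  set β := Eq.symm i with hβi
  set γ := Eq.symm j with hγj
  have hne' : (β : F) ≠ (γ : F) := by
    intro h
    exact hij (Eq.symm.injective (Subtype.ext h) : i = j)
  have h1 : (X - C (β : F)) ^ (g.rootMultiplicity (β : F)) ∣ c γ := hdvd γ (β : F) hne'
  have h2 : g ∣ c γ * c β := by
    calc g = (X - C (β : F)) ^ (g.rootMultiplicity (β : F)) * f β := hgf β
    _ ∣ c γ * c β := mul_dvd_mul h1 (hfc β)
  obtain ⟨d, hd⟩ := h2
  rw [← map_mul, mul_comm (c β) (c γ), hd, map_mul, hgaeval, zero_mul]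

end Roots

open Polynomial

section MinpolyStructure

variable {F : Type*} [Field F]

/-- If `μ ∣ μ' * (X² + X)` then every root of `μ` is `0` or `-1` (char 0). -/
lemma root_mem_of_dvd [CharZero F] {μ : F[X]} (hμ0 : μ ≠ 0) (hdeg : 0 < μ.natDegree)
    (hdvd : μ ∣ derivative μ * (X ^ 2 + X)) {β : F} (hroot : μ.IsRoot β) :
    β = 0 ∨ β = -1 := by
  have hXX : (X ^ 2 + X : F[X]) ≠ 0 := by
    intro h
    have := congrArg (fun p => p.eval 1) h
    norm_num at this
  have hμ' : derivative μ ≠ 0 := by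
    intro h
    have h2 := natDegree_eq_zero_of_derivative_eq_zero h
    omega
  have hprod : derivative μ * (X ^ 2 + X) ≠ 0 := mul_ne_zero hμ' hXX
  have hk : 0 < μ.rootMultiplicity β := (rootMultiplicity_pos hμ0).mpr hroot
  have hle : μ.rootMultiplicity β ≤ (derivative μ * (X ^ 2 + X)).rootMultiplicity β := by
    rw [le_rootMultiplicity_iff hprod]
    exact dvd_trans (μ.pow_rootMultiplicity_dvd β) hdvd
  rw [rootMultiplicity_mul hprod, derivative_rootMultiplicity_of_root hroot] at hle
  have hpos : 0 < (X ^ 2 + X : F[X]).rootMultiplicity β := by omega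
  have hroot2 : (X ^ 2 + X : F[X]).IsRoot β := (rootMultiplicity_pos hXX).mp hpos
  have : β ^ 2 + β = 0 := by simpa [IsRoot] using hroot2
  have : β * (β + 1) = 0 := by ring_nf; linear_combination this
  rcases mul_eq_zero.mp this with h | h
  · exact Or.inl h
  · exact Or.inr (by linear_combination h)

/-- Structure of a polynomial over an algebraically closed field all of whose
roots lie in `{0, -1}`. -/
lemma poly_structure [IsAlgClosed F] {μ : F[X]} (hμ0 : μ ≠ 0)
    (hroots : ∀ β : F, μ.IsRoot β → β = 0 ∨ β = -1) :
    ∃ γ : F, γ ≠ 0 ∧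
      μ = X ^ (μ.rootMultiplicity 0) * (X + 1) ^ (μ.rootMultiplicity (-1)) * C γ := by
  set a := μ.rootMultiplicity 0 with ha
  set b := μ.rootMultiplicity (-1) with hb
  have hXa : (X : F[X]) ^ a ∣ μ := by
    have := μ.pow_rootMultiplicity_dvd 0
    simpa using this
  have hXb : ((X + 1 : F[X])) ^ b ∣ μ := by
    have := μ.pow_rootMultiplicity_dvd (-1)
    simpa [sub_neg_eq_add] using this
  have hco : IsCoprime ((X : F[X]) ^ a) ((X + 1 : F[X]) ^ b) := by
    apply IsCoprime.pow
    exact ⟨-1, 1, by ring⟩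
  obtain ⟨h, hh⟩ := hco.mul_dvd hXa hXb
  have hXa0 : (X : F[X]) ^ a ≠ 0 := pow_ne_zero _ X_ne_zero
  have hXb0 : ((X + 1 : F[X])) ^ b ≠ 0 := pow_ne_zero _ (by
    intro hcon
    have := congrArg (fun p => p.eval 0) hcon
    norm_num at this)
  have hhne : h ≠ 0 := by
    intro hcon
    rw [hcon, mul_zero] at hh
    exact hμ0 hh
  have hdegh : h.natDegree = 0 := by
    by_contra hcon
    obtain ⟨cr, hcr⟩ := IsAlgClosed.exists_root h (by
      intro hd
      exact hcon (natDegree_eq_of_degree_eq_some hd))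
    have hcrμ : μ.IsRoot cr := by
      rw [hh]
      simp [IsRoot, hcr.eq_zero]
    -- compute the root multiplicity of cr in μ using the factorization
    have hrm : ∀ t : F, μ.rootMultiplicity t
        = ((X : F[X]) ^ a).rootMultiplicity t + ((X + 1 : F[X]) ^ b).rootMultiplicity t
          + h.rootMultiplicity t := by
      intro t
      rw [hh, rootMultiplicity_mul (hh ▸ hμ0), rootMultiplicity_mul (mul_ne_zero hXa0 hXb0)]
    rcases hroots cr hcrμ with h0 | h1
    · subst h0
      have h1 : ((X : F[X]) ^ a).rootMultiplicity 0 = a := by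
        have := rootMultiplicity_X_sub_C_pow (R := F) (a := 0) a
        simpa using this
      have h2 : ((X + 1 : F[X]) ^ b).rootMultiplicity 0 = 0 := by
        apply rootMultiplicity_eq_zero
        simp [IsRoot]
      have h3 : 0 < h.rootMultiplicity 0 := (rootMultiplicity_pos hhne).mpr hcr
      have := hrm 0
      omega
    · subst h1
      have h1 : ((X : F[X]) ^ a).rootMultiplicity (-1) = 0 := by
        apply rootMultiplicity_eq_zero
        simp [IsRoot]
      have h2 : ((X + 1 : F[X]) ^ b).rootMultiplicity (-1) = b := by
        have := rootMultiplicity_X_sub_C_pow (R := F) (a := (-1 : F)) b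
        simpa [sub_neg_eq_add] using this
      have h3 : 0 < h.rootMultiplicity (-1) := (rootMultiplicity_pos hhne).mpr hcr
      have := hrm (-1)
      omega
  obtain ⟨γ, hγ⟩ : ∃ γ : F, h = C γ := ⟨h.coeff 0, eq_C_of_natDegree_eq_zero hdegh⟩
  refine ⟨γ, ?_, by rw [hh, hγ, mul_assoc]⟩
  intro hγ0
  rw [hγ0, map_zero] at hγ
  exact hhne hγ

end MinpolyStructure

open Polynomial

section Deriv

variable {F : Type*} [Field F] {E : Type*} [Ring E] [Algebra F E]

lemma deriv_rel (L R : E) (hLR : L * R = R * L + (R * R + R)) (f : F[X]) :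
    L * aeval R f = aeval R f * L + aeval R (derivative f) * (R * R + R) := by
  have hS : aeval R (X * X + X : F[X]) = R * R + R := by simp
  have hcomm : ∀ g : F[X], (R * R + R) * aeval R g = aeval R g * (R * R + R) := by
    intro g
    rw [← hS, ← map_mul, ← map_mul, mul_comm]
  have prod_rule : ∀ p q : F[X],
      (L * aeval R p = aeval R p * L + aeval R (derivative p) * (R * R + R)) →
      (L * aeval R q = aeval R q * L + aeval R (derivative q) * (R * R + R)) →
      L * aeval R (p * q) = aeval R (p * q) * L
        + aeval R (derivative (p * q)) * (R * R + R) := by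
    intro p q hp hq
    calc L * aeval R (p * q) = (L * aeval R p) * aeval R q := by rw [map_mul, mul_assoc]
      _ = (aeval R p * L + aeval R (derivative p) * (R * R + R)) * aeval R q := by rw [hp]
      _ = aeval R p * (L * aeval R q)
          + aeval R (derivative p) * ((R * R + R) * aeval R q) := by noncomm_ring
      _ = aeval R p * (aeval R q * L + aeval R (derivative q) * (R * R + R))
          + aeval R (derivative p) * (aeval R q * (R * R + R)) := by rw [hq, hcomm q]
      _ = (aeval R p * aeval R q) * L
          + (aeval R (derivative p) * aeval R q
            + aeval R p * aeval R (derivative q)) * (R * R + R) := by noncomm_ring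
      _ = aeval R (p * q) * L + aeval R (derivative (p * q)) * (R * R + R) := by
          rw [derivative_mul, map_mul, map_add, map_mul, map_mul]
  induction f using Polynomial.induction_on with
  | C a => simp [Algebra.commutes]
  | add p q hp hq =>
    rw [derivative_add, map_add, map_add, mul_add, hp, hq]
    noncomm_ring
  | monomial n a ih =>
    have hx : (C a * X ^ (n + 1) : F[X]) = (C a * X ^ n) * X := by ring
    rw [hx]
    exact prod_rule _ X ih (by simpa using hLR)

end Deriv

section SideBound

open Polynomial Module

variable {F A : Type*} [Field F] [IsAlgClosed F] [AddCommGroup A] [Module F A]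
  [FiniteDimensional F A]

set_option maxHeartbeats 1000000 in
/-- abstract "one side" argument: produces an arithmetic progression of roots of
the minimal polynomial of `r`, of length the nilpotency index on `ker (T^m)`. -/
lemma side_bound {R : Type*} [Ring R] [Algebra F R] [FiniteDimensional F R]
    (L T : Module.End F R) (c : F) (hc : c ≠ 0) (m : ℕ) (hm : 1 ≤ m)
    (hrel : L * T = T * (L + T + c • 1))
    (hLmem : ∀ x : R, (T ^ m) x = 0 → (T ^ m) (L x) = 0)
    (hwit : ∃ x : R, (T ^ m) x = 0 ∧ (T ^ (m - 1)) x ≠ 0)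
    (r : R) (hLr : ∀ x : R, L x = r * x) :
    ∃ μ₀ : F, ∀ j : ℕ, j ≤ m - 1 → (minpoly F r).IsRoot (μ₀ + (j : F) * c) := by
  classical
  set p : Submodule F R := LinearMap.ker (T ^ m) with hp
  have hTmem : ∀ x ∈ p, T x ∈ p := by
    intro x hx
    rw [hp, LinearMap.mem_ker] at hx ⊢
    have hcomm : T * T ^ m = T ^ m * T := (pow_mul_comm' T m).symm
    have := LinearMap.congr_fun hcomm x
    simp only [Module.End.mul_apply] at this
    rw [← this, hx, map_zero]
  have hLmem' : ∀ x ∈ p, L x ∈ p := by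
    intro x hx
    rw [hp, LinearMap.mem_ker] at hx ⊢
    exact hLmem x hx
  set T₀ : Module.End F p := T.restrict hTmem with hT₀
  set L₀ : Module.End F p := L.restrict hLmem' with hL₀
  have hnil : T₀ ^ m = 0 := by
    rw [hT₀, Module.End.pow_restrict]
    ext x
    simp only [LinearMap.restrict_coe_apply, LinearMap.zero_apply, ZeroMemClass.coe_zero]
    exact LinearMap.mem_ker.mp x.2
  have hrel₀ : L₀ * T₀ = T₀ * (L₀ + T₀ + c • 1) := by
    ext x
    have hx := LinearMap.congr_fun hrel (x : R)
    simp only [Module.End.mul_apply, LinearMap.add_apply, LinearMap.smul_apply,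
      Module.End.one_apply] at hx
    simp only [Module.End.mul_apply, LinearMap.add_apply, LinearMap.smul_apply,
      Module.End.one_apply, hT₀, hL₀, LinearMap.restrict_coe_apply, Submodule.coe_add,
      SetLike.val_smul]
    exact hx
  have hcu : IsUnit (T₀ + c • 1) := by
    apply IsNilpotent.isUnit_add_right_of_commute (R := Module.End F p) ⟨m, hnil⟩
    · have : (c • 1 : Module.End F p) = algebraMap F _ c := by
        rw [Algebra.algebraMap_eq_smul_one]
      rw [this]
      exact (isUnit_iff_ne_zero.mpr hc).map (algebraMap F _)
    · show T₀ * (c • 1) = (c • 1) * T₀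
      rw [mul_smul_comm, smul_mul_assoc, one_mul, mul_one]
  set u := hcu.unit with hu
  have hucoe : (u : Module.End F p) = T₀ + c • 1 := hcu.unit_spec
  have hLv : L₀ * (T₀ * ↑u⁻¹) = (T₀ * ↑u⁻¹) * (L₀ + c • 1) := by
    apply lemC L₀ T₀ (c • 1) u hucoe hrel₀
    rw [mul_smul_comm, smul_mul_assoc, one_mul, mul_one]
  have hcommT : Commute T₀ ((u : Module.End F p)) := by
    rw [hucoe]
    show T₀ * (T₀ + c • 1) = (T₀ + c • 1) * T₀
    rw [mul_add, add_mul, mul_smul_comm, smul_mul_assoc, one_mul, mul_one]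
  have hv : (T₀ * ↑u⁻¹) ^ (m - 1) ≠ 0 := by
    obtain ⟨x, hxm, hxne⟩ := hwit
    have hT₀ne : T₀ ^ (m - 1) ≠ 0 := by
      intro h0
      apply hxne
      have hxp : x ∈ p := LinearMap.mem_ker.mpr hxm
      have := LinearMap.congr_fun h0 ⟨x, hxp⟩
      rw [hT₀, Module.End.pow_restrict] at this
      have := congrArg (Subtype.val) this
      simpa [LinearMap.restrict_coe_apply] using this
    intro h0
    apply hT₀ne
    have hmp : (T₀ * ↑u⁻¹) ^ (m - 1) = T₀ ^ (m - 1) * (↑u⁻¹ : Module.End F p) ^ (m - 1) :=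
      (hcommT.units_inv_right).mul_pow (m - 1)
    have : T₀ ^ (m - 1) = (T₀ * ↑u⁻¹) ^ (m - 1) * (u : Module.End F p) ^ (m - 1) := by
      rw [hmp, mul_assoc, ← Units.val_pow_eq_pow_val, ← Units.val_pow_eq_pow_val,
        ← Units.val_mul, inv_pow, inv_mul_cancel, Units.val_one, mul_one]
    rw [this, h0, zero_mul]
  have hchain : L₀ * (T₀ * ↑u⁻¹) = (T₀ * ↑u⁻¹) * (L₀ + (c : F) • 1) := hLv
  obtain ⟨μ₀, hμ₀⟩ := chain_eigenvalues L₀ (T₀ * ↑u⁻¹) c hchain (m - 1) hv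
  refine ⟨μ₀, ?_⟩
  intro j hj
  obtain ⟨x, hx⟩ := (hμ₀ j hj).exists_hasEigenvector
  have hxe : L₀ x = (μ₀ + (j : F) * c) • x := Module.End.mem_eigenspace_iff.mp hx.1
  have hxne : (x : R) ≠ 0 := fun h => hx.2 (Subtype.ext h)
  apply isRoot_minpoly_of_smul_eq hxne
  have := congrArg (Subtype.val) hxe
  rw [hL₀, LinearMap.restrict_coe_apply] at this
  rw [← hLr]
  exact this

end SideBound

section MainAux

open Polynomial

set_option maxHeartbeats 1600000 in
theorem weight_one_nilpotency {F A : Type*} [Field F] [IsAlgClosed F] [CharZero F]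
    [Ring A] [Algebra F A] [FiniteDimensional F A] [Nontrivial A]
    (n : ℕ)
    (hcap : ∀ (m : ℕ) (e : Fin m → A),
      (∀ i, e i * e i = e i) → (∀ i, e i ≠ 0) →
      (∀ i j, i ≠ j → e i * e j = 0) → m ≤ n)
    (R : A →ₗ[F] A)
    (hR : ∀ x y : A, R x * R y = R (R x * y + x * R y + x * y)) :
    R ^ n * (R + 1) ^ n = 0 := by
  classical
  haveI : Nontrivial (A →ₗ[F] A) :=
    ⟨1, 0, fun h => one_ne_zero (α := A) (by simpa using LinearMap.congr_fun h 1)⟩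
  -- the left-multiplication operator by R 1
  have hLR : (LinearMap.mulLeft F (R 1)) * R
      = R * (LinearMap.mulLeft F (R 1)) + (R * R + R) := by
    ext y
    simp only [Module.End.mul_apply, LinearMap.add_apply, LinearMap.mulLeft_apply]
    have h := hR 1 y
    simp only [one_mul] at h
    rw [h, map_add, map_add]
    abel
  have hint : IsIntegral F R := Algebra.IsIntegral.isIntegral (R := F) R
  have hμ0 : minpoly F R ≠ 0 := minpoly.ne_zero hint
  have hdeg : 0 < (minpoly F R).natDegree := minpoly.natDegree_pos hint
  have hzero : aeval R (derivative (minpoly F R) * (X ^ 2 + X)) = 0 := by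
    have h := deriv_rel (LinearMap.mulLeft F (R 1)) R hLR (minpoly F R)
    rw [minpoly.aeval, mul_zero, zero_mul, zero_add] at h
    have h2 : aeval R (X ^ 2 + X : F[X]) = R * R + R := by
      rw [map_add, map_pow, aeval_X, pow_two]
    rw [map_mul, h2, ← h]
  have hdvdμ : minpoly F R ∣ derivative (minpoly F R) * (X ^ 2 + X) := minpoly.dvd F R hzero
  obtain ⟨γ, hγ0, hfact⟩ := poly_structure hμ0
    (fun β hβ => root_mem_of_dvd hμ0 hdeg hdvdμ hβ)
  set a := (minpoly F R).rootMultiplicity 0 with hadef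
  set b := (minpoly F R).rootMultiplicity (-1) with hbdef
  have hX1ne : (X + 1 : F[X]) ≠ 0 := by
    intro hcon
    have := congrArg (fun p => p.eval 0) hcon
    norm_num at this
  have hXb0 : ((X + 1 : F[X])) ^ b ≠ 0 := pow_ne_zero _ hX1ne
  have hdegX1 : (X + 1 : F[X]).natDegree = 1 := by
    rw [← C_1, natDegree_X_add_C]
  have haeval_ab : ∀ (i j : ℕ), aeval R (X ^ i * (X + 1) ^ j : F[X]) = R ^ i * (R + 1) ^ j := by
    intro i j
    rw [map_mul, map_pow, map_pow, aeval_X, map_add, aeval_X, map_one]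
  have hab : R ^ a * (R + 1) ^ b = 0 := by
    have h := minpoly.aeval F R
    rw [hfact, map_mul, haeval_ab, aeval_C, Algebra.algebraMap_eq_smul_one,
      mul_smul_comm, mul_one] at h
    exact (smul_eq_zero.mp h).resolve_left hγ0
  have hdegsum : (minpoly F R).natDegree = a + b := by
    rw [hfact, natDegree_mul (mul_ne_zero (pow_ne_zero _ X_ne_zero) hXb0)
      (fun hc => hγ0 (by simpa using congrArg (fun p => p.coeff 0) hc)),
      natDegree_mul (pow_ne_zero _ X_ne_zero) hXb0, natDegree_pow, natDegree_pow,
      natDegree_X, hdegX1, natDegree_C]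
    omega
  -- commutation facts
  have hcommR1 : Commute R (R + 1) := by
    show R * (R + 1) = (R + 1) * R
    noncomm_ring
  have hr0 : minpoly F (R 1) ≠ 0 :=
    minpoly.ne_zero (Algebra.IsIntegral.isIntegral (R := F) (R 1))
  -- Side A : a ≤ number of roots of minpoly of R 1
  have haleq : a ≤ (minpoly F (R 1)).roots.toFinset.card := by
    rcases Nat.eq_zero_or_pos a with ha0 | hapos
    · omega
    have hwit : ∃ x : A, (R ^ a) x = 0 ∧ (R ^ (a - 1)) x ≠ 0 := by
      by_contra hcon
      push_neg at hcon
      have hz : aeval R (X ^ (a - 1) * (X + 1) ^ b : F[X]) = 0 := by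
        rw [haeval_ab]
        ext y
        simp only [Module.End.mul_apply, LinearMap.zero_apply]
        apply hcon
        have := LinearMap.congr_fun hab y
        simpa only [Module.End.mul_apply, LinearMap.zero_apply] using this
      have hle := natDegree_le_of_dvd (minpoly.dvd F R hz)
        (mul_ne_zero (pow_ne_zero _ X_ne_zero) hXb0)
      rw [hdegsum, natDegree_mul (pow_ne_zero _ X_ne_zero) hXb0, natDegree_pow,
        natDegree_pow, natDegree_X, hdegX1] at hle
      omega
    have hLmemA : ∀ x : A, (R ^ a) x = 0
        → (R ^ a) ((LinearMap.mulLeft F (R 1)) x) = 0 := by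
      intro x hx
      have h := deriv_rel (LinearMap.mulLeft F (R 1)) R hLR (X ^ a : F[X])
      rw [map_pow, aeval_X, derivative_X_pow, map_mul, aeval_C, map_pow, aeval_X] at h
      have hop : R ^ (a - 1) * (R * R + R) = R * R ^ a + R ^ a := by
        have h1 : R ^ (a - 1) * R = R ^ a := by
          rw [← pow_succ]
          congr 1
          omega
        have h2 : R ^ (a - 1) * (R * R) = R * R ^ a := by
          rw [← mul_assoc, h1, ← pow_mul_comm']
        rw [mul_add, h1, h2]
      rw [mul_assoc, hop] at h
      have h'' := LinearMap.congr_fun h x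
      simp only [Module.End.mul_apply, LinearMap.add_apply] at h''
      rw [hx] at h''
      simpa using h''.symm
    have hrelA : (LinearMap.mulLeft F (R 1)) * R
        = R * ((LinearMap.mulLeft F (R 1)) + R + (1 : F) • 1) := by
      rw [one_smul, hLR]
      noncomm_ring
    obtain ⟨μ₀, hμ₀⟩ := side_bound (LinearMap.mulLeft F (R 1)) R 1 one_ne_zero a hapos
      hrelA hLmemA hwit (R 1) (fun x => rfl)
    have hmem : ∀ j : ℕ, j < a → μ₀ + (j : F) ∈ (minpoly F (R 1)).roots.toFinset := by
      intro j hj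
      have h := hμ₀ j (by omega)
      rw [mul_one] at h
      rw [Multiset.mem_toFinset, mem_roots hr0]
      exact h
    have := Finset.card_le_card_of_injOn (fun j : ℕ => μ₀ + (j : F))
      (fun j hj => hmem j (Finset.mem_range.mp hj))
      (fun i _ j _ h => by
        have h := add_left_cancel (show μ₀ + (i : F) = μ₀ + (j : F) from h)
        exact_mod_cast h)
    simpa using this
  -- Side B : b ≤ number of roots of minpoly of R 1
  have hbleq : b ≤ (minpoly F (R 1)).roots.toFinset.card := by
    rcases Nat.eq_zero_or_pos b with hb0 | hbpos
    · omega
    have hab' : (R + 1) ^ b * R ^ a = 0 := by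
      rw [← (hcommR1.pow_pow a b).eq, hab]
    have hwit : ∃ x : A, ((R + 1) ^ b) x = 0 ∧ ((R + 1) ^ (b - 1)) x ≠ 0 := by
      by_contra hcon
      push_neg at hcon
      have hz : aeval R (X ^ a * (X + 1) ^ (b - 1) : F[X]) = 0 := by
        rw [haeval_ab]
        have hswap : R ^ a * (R + 1) ^ (b - 1) = (R + 1) ^ (b - 1) * R ^ a :=
          (hcommR1.pow_pow a (b - 1)).eq
        rw [hswap]
        ext y
        simp only [Module.End.mul_apply, LinearMap.zero_apply]
        apply hcon
        have := LinearMap.congr_fun hab' y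
        simpa only [Module.End.mul_apply, LinearMap.zero_apply] using this
      have hle := natDegree_le_of_dvd (minpoly.dvd F R hz)
        (mul_ne_zero (pow_ne_zero _ X_ne_zero) (pow_ne_zero _ hX1ne))
      rw [hdegsum, natDegree_mul (pow_ne_zero _ X_ne_zero) (pow_ne_zero _ hX1ne),
        natDegree_pow, natDegree_pow, natDegree_X, hdegX1] at hle
      omega
    have hLmemB : ∀ x : A, ((R + 1) ^ b) x = 0
        → ((R + 1) ^ b) ((LinearMap.mulLeft F (R 1)) x) = 0 := by
      intro x hx
      have h := deriv_rel (LinearMap.mulLeft F (R 1)) R hLR ((X + 1) ^ b : F[X])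
      have hd : derivative ((X + 1) ^ b : F[X]) = C (b : F) * (X + 1) ^ (b - 1) := by
        rw [derivative_pow]
        simp
      have haeX1 : ∀ k : ℕ, aeval R ((X + 1) ^ k : F[X]) = (R + 1) ^ k := by
        intro k
        rw [map_pow, map_add, aeval_X, aeval_one]
      rw [haeX1, hd, map_mul, aeval_C, haeX1] at h
      have hop : (R + 1) ^ (b - 1) * (R * R + R) = R * (R + 1) ^ b := by
        have h1 : (R * R + R) = R * (R + 1) := by noncomm_ring
        have h2 : (R + 1) ^ (b - 1) * (R + 1) = (R + 1) ^ b := by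
          rw [← pow_succ]
          congr 1
          omega
        calc (R + 1) ^ (b - 1) * (R * R + R)
            = ((R + 1) ^ (b - 1) * R) * (R + 1) := by rw [h1, mul_assoc]
          _ = (R * (R + 1) ^ (b - 1)) * (R + 1) := by
              rw [(hcommR1.pow_right (b - 1)).eq]
          _ = R * (R + 1) ^ b := by rw [mul_assoc, h2]
      rw [mul_assoc, hop] at h
      have h'' := LinearMap.congr_fun h x
      simp only [Module.End.mul_apply, LinearMap.add_apply] at h''
      rw [hx] at h''
      simpa using h''.symm
    have hrelB : (LinearMap.mulLeft F (R 1)) * (R + 1)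
        = (R + 1) * ((LinearMap.mulLeft F (R 1)) + (R + 1) + (-1 : F) • 1) := by
      have hsimp : (LinearMap.mulLeft F (R 1)) + (R + 1) + (-1 : F) • 1
          = (LinearMap.mulLeft F (R 1)) + R := by
        have hm1 : ((-1 : F) • (1 : Module.End F A)) = -1 := by ext; simp
        rw [hm1]
        abel
      rw [hsimp, mul_add, mul_one, hLR]
      noncomm_ring
    obtain ⟨μ₁, hμ₁⟩ := side_bound (LinearMap.mulLeft F (R 1)) (R + 1) (-1)
      (neg_ne_zero.mpr one_ne_zero) b hbpos hrelB hLmemB hwit (R 1) (fun x => rfl)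
    have hmem : ∀ j : ℕ, j < b → μ₁ + (j : F) * (-1) ∈ (minpoly F (R 1)).roots.toFinset := by
      intro j hj
      have h := hμ₁ j (by omega)
      rw [Multiset.mem_toFinset, mem_roots hr0]
      exact h
    have := Finset.card_le_card_of_injOn (fun j : ℕ => μ₁ + (j : F) * (-1))
      (fun j hj => hmem j (Finset.mem_range.mp hj))
      (fun i _ j _ h => by
        have h : (i : F) = j := by
          have := add_left_cancel (show μ₁ + (i : F) * (-1) = μ₁ + (j : F) * (-1) from h)
          simpa using this
        exact_mod_cast h)
    simpa using this
  have hcard := card_roots_minpoly_le (F := F) (A := A) n hcap (R 1)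
  have ha : a ≤ n := le_trans haleq hcard
  have hb : b ≤ n := le_trans hbleq hcard
  have e1 : R ^ n = R ^ (n - a) * R ^ a := by
    rw [← pow_add]
    congr 1
    omega
  have e2 : (R + 1) ^ n = (R + 1) ^ b * (R + 1) ^ (n - b) := by
    rw [← pow_add]
    congr 1
    omega
  rw [e1, e2, mul_assoc, ← mul_assoc (R ^ a), hab, zero_mul, mul_zero]

end MainAux

/-- Over an algebraically closed field `F` of characteristic zero, if a
unital finite-dimensional associative `F`-algebra `A` has capacity at most `n` (every
family of pairwise orthogonal nonzero idempotents has at most `n` members), then every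
Rota–Baxter operator of nonzero weight `lam` on `A` satisfies
`R^k ∘ (R + lam•id)^(2n−k) = 0` for some `k ≤ 2n`; in particular `rb_lam(A) ≤ 2n`. -/
theorem rb_index_le_twice_capacity
    {F : Type*} [Field F] [IsAlgClosed F] [CharZero F]
    {A : Type*} [Ring A] [Algebra F A] [FiniteDimensional F A]
    (lam : F) (hlam : lam ≠ 0) (n : ℕ)
    (hcap : ∀ (m : ℕ) (e : Fin m → A),
      (∀ i, e i * e i = e i) → (∀ i, e i ≠ 0) →
      (∀ i j, i ≠ j → e i * e j = 0) → m ≤ n) :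
    ∀ R : A →ₗ[F] A,
      (∀ x y : A, R x * R y = R (R x * y + x * R y + lam • (x * y))) →
      ∃ k ≤ 2 * n, R ^ k * (R + lam • LinearMap.id) ^ (2 * n - k) = 0 := by
  intro R hRB
  rcases subsingleton_or_nontrivial A with hsub | hnt
  · exact ⟨0, Nat.zero_le _, LinearMap.ext fun x => Subsingleton.elim _ _⟩
  · have hR'w : ∀ x y : A, (lam⁻¹ • R) x * (lam⁻¹ • R) y
        = (lam⁻¹ • R) ((lam⁻¹ • R) x * y + x * (lam⁻¹ • R) y + x * y) := by
      intro x y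
      simp only [LinearMap.smul_apply, smul_mul_assoc, mul_smul_comm, map_add, map_smul,
        smul_add, smul_smul, smul_mul_smul_comm]
      rw [hRB x y, map_add, map_add, map_smul]
      simp only [smul_add, smul_smul]
      match_scalars <;> field_simp
    have hmain := weight_one_nilpotency n hcap (lam⁻¹ • R) hR'w
    refine ⟨n, by omega, ?_⟩
    rw [show 2 * n - n = n from by omega]
    have hRR : R = lam • (lam⁻¹ • R) := by
      rw [smul_smul, mul_inv_cancel₀ hlam, one_smul]
    have hid : R + lam • LinearMap.id = lam • ((lam⁻¹ • R) + 1) := by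
      rw [smul_add, ← hRR, Module.End.one_eq_id]
    calc R ^ n * (R + lam • LinearMap.id) ^ n
        = (lam • (lam⁻¹ • R)) ^ n * (lam • ((lam⁻¹ • R) + 1)) ^ n := by rw [← hRR, ← hid]
      _ = (lam ^ n • (lam⁻¹ • R) ^ n) * (lam ^ n • ((lam⁻¹ • R) + 1) ^ n) := by
          simp only [_root_.smul_pow]
      _ = (lam ^ n * lam ^ n) • ((lam⁻¹ • R) ^ n * ((lam⁻¹ • R) + 1) ^ n) := by
          rw [smul_mul_smul_comm]
      _ = 0 := by rw [hmain, smul_zero]
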